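/- Every Eisenstein triple, i.e., every (a, b, c) ∈ ℤ³_{≥0} \ {(0,0,0)} with a² − ab + b² = c², is a positive rational multiple of (m(2n − m), n(2m − n), m² − mn + n²) for some positive coprime integers m, n with 1/2 ≤ m/n ≤ 2; conversely, every integer triple that is a positive rational multiple of such a triple is an Eisenstein triple. -/

import Mathlib

theorem stmt_2 (a b c : ℤ) (ha : 0 ≤ a) (hb : 0 ≤ b) (hc : 0 ≤ c) :
    ((a, b, c) ≠ (0, 0, 0) ∧ a ^ 2 - a * b + b ^ 2 = c ^ 2 ↔
      ∃ m n : ℤ, 0 < m ∧ 0 < n ∧ Int.gcd m n = 1 ∧ n ≤ 2 * m ∧ m ≤ 2 * n ∧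
        ∃ t : ℚ, 0 < t ∧
          (a : ℚ) = t * (m * (2 * n - m)) ∧
          (b : ℚ) = t * (n * (2 * m - n)) ∧
          (c : ℚ) = t * (m ^ 2 - m * n + n ^ 2)) := by
  constructor
  · rintro ⟨hne, heq⟩
    have hc0 : 0 < c := by
      rcases lt_or_eq_of_le hc with h | h
      · exact h
      · exfalso
        have hc' : c = 0 := h.symm
        have hb0 : b = 0 := by nlinarith [sq_nonneg (2*a - b), sq_nonneg b]
        have ha0 : a = 0 := by nlinarith
        exact hne (by simp [ha0, hb0, hc'])
    have hac : 0 < a + c := by linarith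
    have hbc : 0 < b + c := by linarith
    set g : ℕ := Int.gcd (a + c) (b + c) with hgdef
    have hgne : Int.gcd (a + c) (b + c) ≠ 0 := by
      simp only [Ne, Int.gcd_eq_zero_iff]
      rintro ⟨h1, h2⟩; omega
    have hgpos : 0 < (g : ℤ) := by exact_mod_cast Nat.pos_of_ne_zero hgne
    have hd1 : (g : ℤ) ∣ (a + c) := Int.gcd_dvd_left (a + c) (b + c)
    have hd2 : (g : ℤ) ∣ (b + c) := Int.gcd_dvd_right (a + c) (b + c)
    set m : ℤ := (b + c) / g with hmdef
    set n : ℤ := (a + c) / g with hndef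
    have hm : (g : ℤ) * m = b + c := Int.mul_ediv_cancel' hd2
    have hn : (g : ℤ) * n = a + c := Int.mul_ediv_cancel' hd1
    have hmpos : 0 < m := by
      rcases lt_trichotomy m 0 with h | h | h
      · nlinarith
      · rw [h] at hm; simp at hm; omega
      · exact h
    have hnpos : 0 < n := by
      rcases lt_trichotomy n 0 with h | h | h
      · nlinarith
      · rw [h] at hn; simp at hn; omega
      · exact h
    -- inequalities a ≤ b + c and b ≤ a + c
    have hab : a ≤ b + c := by nlinarith [mul_nonneg ha hb]
    have hba : b ≤ a + c := by nlinarith [mul_nonneg ha hb]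
    refine ⟨m, n, hmpos, hnpos, ?_, ?_, ?_, ?_⟩
    · -- coprime
      have h0 : 0 < Int.gcd (b + c) (a + c) := by
        rw [Int.gcd_comm]; exact Nat.pos_of_ne_zero hgne
      have := Int.gcd_div_gcd_div_gcd (i := b + c) (j := a + c) h0
      rwa [Int.gcd_comm (b+c) (a+c)] at this
    · -- n ≤ 2 m
      have h : (g : ℤ) * n ≤ (g : ℤ) * (2 * m) := by
        rw [hn]; nlinarith
      exact le_of_mul_le_mul_left h hgpos
    · have h : (g : ℤ) * m ≤ (g : ℤ) * (2 * n) := by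
        rw [hm]; nlinarith
      exact le_of_mul_le_mul_left h hgpos
    · -- existence of t
      have hsZ : (0:ℤ) < a + b + 2 * c := by linarith
      have hs : (0:ℚ) < (a:ℚ) + b + 2 * c := by exact_mod_cast hsZ
      refine ⟨(g : ℚ)^2 / ((a:ℚ) + b + 2 * c), by positivity, ?_, ?_, ?_⟩
      · have hA : a * (a + b + 2*c) = (g:ℤ)^2 * (m * (2*n - m)) := by
          have e : (g:ℤ)^2 * (m * (2*n - m)) = ((g:ℤ)*m) * (2*((g:ℤ)*n) - (g:ℤ)*m) := by ring
          rw [e, hm, hn]; linear_combination heq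
        rw [div_mul_eq_mul_div, eq_div_iff hs.ne']
        exact_mod_cast hA
      · have hB : b * (a + b + 2*c) = (g:ℤ)^2 * (n * (2*m - n)) := by
          have e : (g:ℤ)^2 * (n * (2*m - n)) = ((g:ℤ)*n) * (2*((g:ℤ)*m) - (g:ℤ)*n) := by ring
          rw [e, hm, hn]; linear_combination heq
        rw [div_mul_eq_mul_div, eq_div_iff hs.ne']
        exact_mod_cast hB
      · have hC : c * (a + b + 2*c) = (g:ℤ)^2 * (m^2 - m*n + n^2) := by
          have e : (g:ℤ)^2 * (m^2 - m*n + n^2)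
              = ((g:ℤ)*m)^2 - ((g:ℤ)*m)*((g:ℤ)*n) + ((g:ℤ)*n)^2 := by ring
          rw [e, hm, hn]; linear_combination -heq
        rw [div_mul_eq_mul_div, eq_div_iff hs.ne']
        exact_mod_cast hC
  · rintro ⟨m, n, hm, hn, hgcd, h1, h2, t, ht, ea, eb, ec⟩
    have hCpos : (0:ℤ) < m^2 - m*n + n^2 := by nlinarith
    have hcQ : (0:ℚ) < (c:ℚ) := by
      rw [ec]
      apply mul_pos ht
      have : ((0:ℤ):ℚ) < ((m^2 - m*n + n^2 : ℤ) : ℚ) := by exact_mod_cast hCpos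
      push_cast at this
      linarith
    have hcpos : 0 < c := by exact_mod_cast hcQ
    constructor
    · intro h
      simp only [Prod.mk.injEq] at h
      omega
    · have key : ((a^2 - a*b + b^2 : ℤ) : ℚ) = ((c^2 : ℤ) : ℚ) := by
        push_cast
        rw [ea, eb, ec]; ring
      exact_mod_cast key
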